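/- Łoś's theorem for Kripke models: given models M_i on frames F_i and an ultrafilter U on I, in the ultraproduct model ∏_U M_i a formula A is true at f_U if and only if {i ∈ I : A is true at f(i) in M_i} ∈ U. -/

import Mathlib

inductive ModalFormula (α : Type) : Type
  | var : α → ModalFormula α
  | falsum : ModalFormula α
  | imp : ModalFormula α → ModalFormula α → ModalFormula α
  | box : ModalFormula α → ModalFormula α

def Truth {α X : Type} (R : X → X → Prop) (V : α → Set X) : X → ModalFormula α → Prop
  | w, .var p => w ∈ V p
  | _, .falsum => False
  | w, .imp A B => Truth R V w A → Truth R V w B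
  | w, .box A => ∀ v, R w v → Truth R V v A

def Valid {α X : Type} (R : X → X → Prop) (A : ModalFormula α) : Prop :=
  ∀ (V : α → Set X) (w : X), Truth R V w A

def uprodSetoid {I : Type} (X : I → Type) (U : Ultrafilter I) : Setoid (∀ i, X i) where
  r f g := {i | f i = g i} ∈ U
  iseqv := by
    refine ⟨fun f => Filter.univ_mem' fun i => rfl, fun {f g} h => ?_, fun {f g h} h1 h2 => ?_⟩
    · exact Filter.mem_of_superset h fun i hi => hi.symm
    · exact Filter.mem_of_superset (Filter.inter_mem h1 h2) fun i hi => hi.1.trans hi.2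

def UProd {I : Type} (X : I → Type) (U : Ultrafilter I) : Type :=
  Quotient (uprodSetoid X U)

def UProd.mk {I : Type} {X : I → Type} {U : Ultrafilter I} (f : ∀ i, X i) : UProd X U :=
  Quotient.mk (uprodSetoid X U) f

def UProdRel {I : Type} {X : I → Type} (R : ∀ i, X i → X i → Prop) (U : Ultrafilter I) :
    UProd X U → UProd X U → Prop :=
  Quotient.lift₂ (fun f g => {i | R i (f i) (g i)} ∈ U)
    (by
      intro f g f' g' hf hg
      have hf' : {i | f i = f' i} ∈ U := hf
      have hg' : {i | g i = g' i} ∈ U := hg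
      refine propext ⟨fun h => ?_, fun h => ?_⟩
      · refine Filter.mem_of_superset (Filter.inter_mem (Filter.inter_mem h hf') hg')
          fun i hi => ?_
        obtain ⟨⟨h1, h2⟩, h3⟩ := hi
        simp only [Set.mem_setOf_eq] at *
        rw [← h2, ← h3]; exact h1
      · refine Filter.mem_of_superset (Filter.inter_mem (Filter.inter_mem h hf') hg')
          fun i hi => ?_
        obtain ⟨⟨h1, h2⟩, h3⟩ := hi
        simp only [Set.mem_setOf_eq] at *
        rw [h2, h3]; exact h1)

def UProdVal {I : Type} {X : I → Type} {α : Type} (V : ∀ i, α → Set (X i)) (U : Ultrafilter I) :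
    α → Set (UProd X U) := fun p =>
  {x | Quotient.liftOn x (fun f => {i | f i ∈ V i p} ∈ U)
    (by
      intro f g hfg
      have hfg' : {i | f i = g i} ∈ U := hfg
      refine propext ⟨fun h => ?_, fun h => ?_⟩
      · refine Filter.mem_of_superset (Filter.inter_mem h hfg') fun i hi => ?_
        obtain ⟨h1, h2⟩ := hi
        simp only [Set.mem_setOf_eq] at *
        rw [← h2]; exact h1
      · refine Filter.mem_of_superset (Filter.inter_mem h hfg') fun i hi => ?_
        obtain ⟨h1, h2⟩ := hi
        simp only [Set.mem_setOf_eq] at *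
        rw [h2]; exact h1)}

/-- Łoś's theorem for Kripke models: in the ultraproduct of the models
`M i = (X i, R i, V i)` modulo the ultrafilter `U`, a formula `A` is true at
`f_U` iff `A` is true at `f i` in `M i` for `U`-almost all `i`. -/
theorem los_kripke {α I : Type} {X : I → Type} (R : ∀ i, X i → X i → Prop)
    (V : ∀ i, α → Set (X i)) (U : Ultrafilter I) (f : ∀ i, X i)
    (A : ModalFormula α) :
    Truth (UProdRel R U) (UProdVal V U) (UProd.mk f) A ↔
      {i | Truth (R i) (V i) (f i) A} ∈ U := by
  induction A generalizing f with
  | var p =>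
    simp only [Truth, UProdVal, UProd.mk, Set.mem_setOf_eq, Quotient.liftOn_mk]
    exact Iff.rfl
  | falsum =>
    simp only [Truth, Set.setOf_false]
    exact ⟨False.elim, fun h => U.empty_notMem h⟩
  | imp A B ihA ihB =>
    simp only [Truth]
    rw [ihA, ihB]
    constructor
    · intro h
      rcases (Ultrafilter.mem_or_compl_mem U {i | Truth (R i) (V i) (f i) A}) with hA | hA
      · exact Filter.mem_of_superset (Filter.inter_mem (h hA) hA)
          (fun i hi _ => hi.1)
      · exact Filter.mem_of_superset hA (fun i hi hT => absurd hT hi)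
    · intro h hA
      exact Filter.mem_of_superset (Filter.inter_mem h hA) (fun i hi => hi.1 hi.2)
  | box A ih =>
    constructor
    · intro h
      by_contra hmem
      rw [← Ultrafilter.compl_mem_iff_notMem] at hmem
      have hex : ∀ i ∈ ({i | Truth (R i) (V i) (f i) (ModalFormula.box A)} : Set I)ᶜ,
          ∃ v, R i (f i) v ∧ ¬ Truth (R i) (V i) v A := by
        intro i hi
        simp only [Set.mem_compl_iff, Set.mem_setOf_eq, Truth, not_forall] at hi
        obtain ⟨v, hv, hnt⟩ := hi
        exact ⟨v, hv, hnt⟩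
      classical
      set g : ∀ i, X i := fun i =>
        if hc : ∃ v, R i (f i) v ∧ ¬ Truth (R i) (V i) v A then hc.choose else f i with hg
      have hRg : UProdRel R U (UProd.mk f) (UProd.mk g) := by
        show {i | R i (f i) (g i)} ∈ U
        refine Filter.mem_of_superset hmem (fun i hi => ?_)
        have hc := hex i hi
        simp only [Set.mem_setOf_eq, hg, dif_pos hc]
        exact hc.choose_spec.1
      have hTg := (ih g).mp (h _ hRg)
      have : ({i | Truth (R i) (V i) (g i) A} ∩
          ({i | Truth (R i) (V i) (f i) (ModalFormula.box A)})ᶜ : Set I) ∈ U :=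
        Filter.inter_mem hTg hmem
      obtain ⟨i, h1, h2⟩ := U.nonempty_of_mem this
      have hc := hex i h2
      simp only [Set.mem_setOf_eq, hg, dif_pos hc] at h1
      exact hc.choose_spec.2 h1
    · intro h v hv
      induction v using Quotient.inductionOn with
      | h g =>
        have hR : {i | R i (f i) (g i)} ∈ U := hv
        refine (ih g).mpr ?_
        refine Filter.mem_of_superset (Filter.inter_mem h hR) (fun i hi => ?_)
        exact hi.1 _ hi.2
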